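/- arXiv:1412.5789 — 2 statements merged into one kernel-verified Lean document; each statement's English description precedes it below -/
import Mathlib

section
/- Fix j ∈ {1,2}, ρ ≥ 1 and an integer N ≥ 1, and consider the regular-amplitude case μ = 1. Then for all s > 0 and ω > 0 the following two estimates hold: (i) |φ_N^{(j)}(s,ω,ρ,1)| ≤ a_{N,ρ} ω^{−N/ρ}, where a_{N,ρ} := (1/((N−1)! ρ)) Γ(N/ρ); (ii) |φ_N^{(j)}(s,ω,ρ,1)| ≤ b_{N,ρ} ω^{−(1+(N−1)/ρ)} s^{1−ρ} + c_{N,ρ} ω^{−(1+N/ρ)} s^{−ρ}, where b_{1,ρ} := ρ^{−1} and c_{1,ρ} := ((ρ−1)/ρ²) Γ(1/ρ) if N = 1, and b_{N,ρ} := (1/(ρ²(N−2)!)) Γ((N−1)/ρ) and c_{N,ρ} := ((ρ−1)/(ρ²(N−1)!)) Γ(N/ρ) if N ≥ 2. -/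
/-!
STATEMENT 3: Fix j ∈ {1,2}, ρ ≥ 1 and an integer N ≥ 1, in the regular-amplitude case μ = 1.
Then for all s > 0 and ω > 0:
(i)  |φ_N^{(j)}(s,ω,ρ,1)| ≤ a_{N,ρ} ω^{−N/ρ} with a_{N,ρ} = (1/((N−1)! ρ)) Γ(N/ρ);
(ii) |φ_N^{(j)}(s,ω,ρ,1)| ≤ b_{N,ρ} ω^{−(1+(N−1)/ρ)} s^{1−ρ} + c_{N,ρ} ω^{−(1+N/ρ)} s^{−ρ},
with b_{1,ρ} = ρ⁻¹, c_{1,ρ} = ((ρ−1)/ρ²) Γ(1/ρ), and for N ≥ 2,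
b_{N,ρ} = (1/(ρ²(N−2)!)) Γ((N−1)/ρ), c_{N,ρ} = ((ρ−1)/(ρ²(N−1)!)) Γ(N/ρ).
-/
open MeasureTheory

/-- The sign (−1)^{j+1}: +1 for j = 1, −1 for j = 2. -/
noncomputable def esgn (j : ℕ) : ℝ := if j = 1 then 1 else -1

/-- The unit direction e^{(−1)^{j+1} iπ/(2ρ)} of the half-line Λ^{(j)}. -/
noncomputable def edir (j : ℕ) (ρ : ℝ) : ℂ :=
  Complex.exp ((esgn j * (Real.pi / (2 * ρ)) : ℝ) * Complex.I)

/-- The integrand of φ_{n+1}^{(j)}(s,ω,ρ,μ), parametrizing Λ^{(j)}(s) by z = s + t·e^{(−1)^{j+1}iπ/(2ρ)},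
    t ≥ 0 (principal-branch complex powers). -/
noncomputable def phiInt (j n : ℕ) (s ω ρ μ : ℝ) (t : ℝ) : ℂ :=
  (((s : ℂ) + (t : ℂ) * edir j ρ) - (s : ℂ)) ^ n *
    ((s : ℂ) + (t : ℂ) * edir j ρ) ^ ((μ : ℂ) - 1) *
    Complex.exp ((esgn j : ℂ) * Complex.I * (ω : ℂ) *
      ((s : ℂ) + (t : ℂ) * edir j ρ) ^ (ρ : ℂ)) *
    edir j ρ

/-- φ_{n+1}^{(j)}(s,ω,ρ,μ) := ((−1)^{n+1}/n!) ∫_{Λ^{(j)}(s)} (z−s)^n z^{μ−1} e^{(−1)^{j+1}iωz^ρ} dz. -/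
noncomputable def phiE (j n : ℕ) (s ω ρ μ : ℝ) : ℂ :=
  ((-1 : ℂ) ^ (n + 1) / (n.factorial : ℂ)) * ∫ t in Set.Ioi (0 : ℝ), phiInt j n s ω ρ μ t

open Real Set Filter

lemma esgn_cases (j : ℕ) : esgn j = 1 ∨ esgn j = -1 := by
  unfold esgn; split_ifs <;> simp

lemma esgn_sq (j : ℕ) : esgn j * esgn j = 1 := by
  rcases esgn_cases j with h | h <;> rw [h] <;> norm_num

lemma theta_pos {ρ : ℝ} (hρ : 1 ≤ ρ) : 0 < π / (2 * ρ) := by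
  have := Real.pi_pos; positivity

lemma theta_le {ρ : ℝ} (hρ : 1 ≤ ρ) : π / (2 * ρ) ≤ π / 2 := by
  have := Real.pi_pos
  apply div_le_div_of_nonneg_left this.le (by norm_num) (by linarith)

lemma neg_pi_div_two_le_theta {ρ : ℝ} (hρ : 1 ≤ ρ) : -(π / 2) ≤ π / (2 * ρ) := by
  have := Real.pi_pos
  linarith [theta_pos hρ]

lemma cos_theta_nonneg {ρ : ℝ} (hρ : 1 ≤ ρ) : 0 ≤ Real.cos (π / (2 * ρ)) :=
  Real.cos_nonneg_of_mem_Icc ⟨neg_pi_div_two_le_theta hρ, theta_le hρ⟩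

lemma sin_theta_pos {ρ : ℝ} (hρ : 1 ≤ ρ) : 0 < Real.sin (π / (2 * ρ)) :=
  Real.sin_pos_of_pos_of_lt_pi (theta_pos hρ)
    (lt_of_le_of_lt (theta_le hρ) (by linarith [Real.pi_pos]))

lemma edir_re (j : ℕ) (ρ : ℝ) : (edir j ρ).re = Real.cos (π / (2 * ρ)) := by
  rw [edir, Complex.exp_ofReal_mul_I_re]
  rcases esgn_cases j with h | h <;> rw [h] <;> simp

lemma edir_im (j : ℕ) (ρ : ℝ) : (edir j ρ).im = esgn j * Real.sin (π / (2 * ρ)) := by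
  rw [edir, Complex.exp_ofReal_mul_I_im]
  rcases esgn_cases j with h | h <;> rw [h] <;> simp

lemma abs_edir (j : ℕ) (ρ : ℝ) : ‖edir j ρ‖ = 1 := Complex.norm_exp_ofReal_mul_I _

lemma z_re (j : ℕ) (ρ σ t : ℝ) :
    ((σ:ℂ) + t * edir j ρ).re = σ + t * Real.cos (π / (2 * ρ)) := by
  simp [Complex.add_re, Complex.mul_re, edir_re, edir_im]

lemma z_im (j : ℕ) (ρ σ t : ℝ) :
    ((σ:ℂ) + t * edir j ρ).im = t * (esgn j * Real.sin (π / (2 * ρ))) := by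
  simp [Complex.add_im, Complex.mul_im, edir_im]

lemma z_re_nonneg (j : ℕ) {ρ σ t : ℝ} (hρ : 1 ≤ ρ) (hσ : 0 ≤ σ) (ht : 0 ≤ t) :
    0 ≤ ((σ:ℂ) + t * edir j ρ).re := by
  rw [z_re]
  have := cos_theta_nonneg hρ
  positivity

lemma le_abs_z_left (j : ℕ) {ρ σ t : ℝ} (hρ : 1 ≤ ρ) (hσ : 0 ≤ σ) (ht : 0 ≤ t) :
    σ ≤ ‖(σ:ℂ) + t * edir j ρ‖ := by
  calc σ ≤ ((σ:ℂ) + t * edir j ρ).re := by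
        rw [z_re]; nlinarith [cos_theta_nonneg hρ]
    _ ≤ ‖_‖ := Complex.re_le_norm _

lemma le_abs_z_right (j : ℕ) {ρ σ t : ℝ} (hρ : 1 ≤ ρ) (hσ : 0 ≤ σ) (ht : 0 ≤ t) :
    t ≤ ‖(σ:ℂ) + t * edir j ρ‖ := by
  set w := (σ:ℂ) + t * edir j ρ with hw
  have h1 : ‖w‖ ^ 2 = w.re ^ 2 + w.im ^ 2 := by
    rw [Complex.sq_norm, Complex.normSq_apply]; ring
  have h2 : t ^ 2 ≤ ‖w‖ ^ 2 := by
    rw [h1, z_re, z_im]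
    have hc := cos_theta_nonneg hρ
    have hs : Real.sin (π / (2*ρ)) ^ 2 + Real.cos (π / (2*ρ)) ^ 2 = 1 :=
      Real.sin_sq_add_cos_sq _
    have h3 : (t * (esgn j * Real.sin (π / (2 * ρ)))) ^ 2
        = t ^ 2 * Real.sin (π / (2 * ρ)) ^ 2 := by
      rcases esgn_cases j with h | h <;> rw [h] <;> ring
    rw [h3]
    nlinarith [sq_nonneg σ, mul_nonneg (mul_nonneg hσ ht) hc]
  nlinarith [norm_nonneg w]

lemma z_ne_zero (j : ℕ) {ρ σ t : ℝ} (hρ : 1 ≤ ρ) (hσ : 0 ≤ σ) (ht : 0 ≤ t)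
    (hpos : 0 < σ + t) : ((σ:ℂ) + t * edir j ρ) ≠ 0 := by
  intro h
  have h1 := le_abs_z_left j hρ hσ ht
  have h2 := le_abs_z_right j hρ hσ ht
  rw [h] at h1 h2
  simp at h1 h2
  linarith

lemma arg_z_eq (j : ℕ) {ρ σ t : ℝ} (hρ : 1 ≤ ρ) (hσ : 0 ≤ σ) (ht : 0 ≤ t)
    (hpos : 0 < σ + t) :
    esgn j * Complex.arg ((σ:ℂ) + t * edir j ρ) =
      Real.arcsin (t * Real.sin (π / (2 * ρ)) / ‖(σ:ℂ) + t * edir j ρ‖) := by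
  rw [Complex.arg_of_re_nonneg (z_re_nonneg j hρ hσ ht), z_im]
  rcases esgn_cases j with h | h <;> rw [h]
  · ring_nf
  · rw [show t * (-1 * Real.sin (π / (2*ρ))) = -(t * Real.sin (π / (2*ρ))) by ring,
      neg_div, Real.arcsin_neg]
    ring

lemma arg_z_nonneg (j : ℕ) {ρ σ t : ℝ} (hρ : 1 ≤ ρ) (hσ : 0 ≤ σ) (ht : 0 ≤ t)
    (hpos : 0 < σ + t) :
    0 ≤ esgn j * Complex.arg ((σ:ℂ) + t * edir j ρ) := by
  rw [arg_z_eq j hρ hσ ht hpos]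
  apply Real.arcsin_nonneg.mpr
  have h1 := le_abs_z_left j hρ hσ ht
  have h2 := le_abs_z_right j hρ hσ ht
  have hs := (sin_theta_pos hρ).le
  positivity

lemma arg_z_le (j : ℕ) {ρ σ t : ℝ} (hρ : 1 ≤ ρ) (hσ : 0 ≤ σ) (ht : 0 ≤ t)
    (hpos : 0 < σ + t) :
    esgn j * Complex.arg ((σ:ℂ) + t * edir j ρ) ≤ π / (2 * ρ) := by
  rw [arg_z_eq j hρ hσ ht hpos]
  have habs : 0 < ‖(σ:ℂ) + t * edir j ρ‖ := by
    have h1 := le_abs_z_left j hρ hσ ht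
    have h2 := le_abs_z_right j hρ hσ ht
    linarith
  have key : t * Real.sin (π / (2 * ρ)) / ‖(σ:ℂ) + t * edir j ρ‖
      ≤ Real.sin (π / (2 * ρ)) := by
    rw [div_le_iff₀ habs]
    have h2 := le_abs_z_right j hρ hσ ht
    nlinarith [(sin_theta_pos hρ).le]
  calc Real.arcsin _ ≤ Real.arcsin (Real.sin (π / (2*ρ))) := Real.monotone_arcsin key
    _ = π / (2 * ρ) := Real.arcsin_sin (neg_pi_div_two_le_theta hρ) (theta_le hρ)

lemma im_cpow_real {w : ℂ} (hw : w ≠ 0) (c : ℝ) :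
    (w ^ (c:ℂ)).im = ‖w‖ ^ c * Real.sin (c * Complex.arg w) := by
  rw [Complex.cpow_def_of_ne_zero hw, Complex.exp_im]
  have hre : (Complex.log w * (c:ℂ)).re = Real.log (‖w‖) * c := by
    simp [Complex.mul_re, Complex.log_re]
  have him : (Complex.log w * (c:ℂ)).im = c * Complex.arg w := by
    simp [Complex.mul_im, Complex.log_im]; ring
  rw [hre, him, Real.rpow_def_of_pos (norm_pos_iff.mpr hw), mul_comm (Real.log _) c]

lemma abs_cpow_real {w : ℂ} (hw : w ≠ 0) (c : ℝ) :
    ‖w ^ (c:ℂ)‖ = ‖w‖ ^ c := by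
  rw [Complex.norm_cpow_of_ne_zero hw]; simp

lemma z_mem_slitPlane (j : ℕ) {ρ σ t : ℝ} (hρ : 1 ≤ ρ) (hσ : 0 ≤ σ) (ht : 0 ≤ t)
    (hpos : 0 < σ + t) : ((σ:ℂ) + t * edir j ρ) ∈ Complex.slitPlane := by
  rcases lt_or_ge 0 t with htp | ht0
  · right
    rw [z_im]
    have hs := sin_theta_pos hρ
    rcases esgn_cases j with h | h <;> rw [h] <;> nlinarith
  · left
    have ht0' : t = 0 := le_antisymm ht0 ht
    rw [z_re, ht0']
    simpa using by linarith

lemma esgn_im_cpow_nonneg (j : ℕ) {ρ σ t : ℝ} (hρ : 1 ≤ ρ) (hσ : 0 ≤ σ) (ht : 0 ≤ t)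
    (hpos : 0 < σ + t) {c : ℝ} (hc : 0 ≤ c) (hcρ : c ≤ ρ) :
    0 ≤ esgn j * ((((σ:ℂ) + t * edir j ρ)) ^ (c:ℂ)).im := by
  set w := (σ:ℂ) + t * edir j ρ with hwdef
  have hw : w ≠ 0 := z_ne_zero j hρ hσ ht hpos
  rw [im_cpow_real hw c]
  set β := esgn j * Complex.arg w with hβ
  have hβ0 : 0 ≤ β := arg_z_nonneg j hρ hσ ht hpos
  have hβθ : β ≤ π / (2 * ρ) := arg_z_le j hρ hσ ht hpos
  have hsin : esgn j * Real.sin (c * Complex.arg w) = Real.sin (c * β) := by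
    rcases esgn_cases j with h | h <;> rw [h] at hβ ⊢
    · rw [hβ]; ring_nf
    · rw [hβ]
      rw [show c * (-1 * Complex.arg w) = -(c * Complex.arg w) by ring, Real.sin_neg]
      ring
  have : esgn j * (‖w‖ ^ c * Real.sin (c * Complex.arg w))
      = ‖w‖ ^ c * (esgn j * Real.sin (c * Complex.arg w)) := by ring
  rw [this, hsin]
  apply mul_nonneg (Real.rpow_nonneg (norm_nonneg w) c)
  apply Real.sin_nonneg_of_nonneg_of_le_pi (by positivity)
  have hρ0 : 0 < ρ := by linarith
  have h1 : c * β ≤ ρ * (π / (2 * ρ)) := by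
    apply mul_le_mul hcρ hβθ hβ0 hρ0.le
  have h2 : ρ * (π / (2 * ρ)) = π / 2 := by field_simp
  have := Real.pi_pos
  linarith [h1.trans_eq h2]

lemma hasDerivAt_inner (j : ℕ) (ρ t : ℝ) (σ : ℝ) :
    HasDerivAt (fun σ : ℝ => (σ:ℂ) + (t:ℂ) * edir j ρ) 1 σ := by
  simpa using (Complex.ofRealCLM.hasDerivAt (x := σ)).add_const ((t:ℂ) * edir j ρ)

lemma phase_mono (j : ℕ) {ρ s t : ℝ} (hρ : 1 ≤ ρ) (hs : 0 < s) (ht : 0 < t) :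
    t ^ ρ ≤ esgn j * ((((s:ℂ) + t * edir j ρ)) ^ (ρ:ℂ)).im := by
  set g : ℝ → ℝ := fun σ => esgn j * ((((σ:ℂ) + t * edir j ρ)) ^ (ρ:ℂ)).im with hgdef
  have hρ0 : 0 < ρ := by linarith
  -- derivative of g at σ ≥ 0
  have hg : ∀ σ : ℝ, 0 ≤ σ → HasDerivAt g
      (esgn j * (((ρ:ℂ) * ((σ:ℂ) + t * edir j ρ) ^ ((ρ:ℂ) - 1) * 1)).im) σ := by
    intro σ hσ
    have hslit := z_mem_slitPlane j hρ hσ ht.le (by linarith)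
    have hΦ : HasDerivAt (fun ζ : ℂ => (ζ + ↑t * edir j ρ) ^ (ρ:ℂ))
        ((ρ:ℂ) * ((σ:ℂ) + t * edir j ρ) ^ ((ρ:ℂ) - 1) * 1) ((σ:ℂ)) :=
      HasDerivAt.cpow_const ((hasDerivAt_id _).add_const _) hslit
    have hcp : HasDerivAt (fun σ : ℝ => ((σ:ℂ) + t * edir j ρ) ^ (ρ:ℂ))
        ((ρ:ℂ) * ((σ:ℂ) + t * edir j ρ) ^ ((ρ:ℂ) - 1) * 1) σ := hΦ.comp_ofReal
    have him := Complex.imCLM.hasFDerivAt.comp_hasDerivAt σ hcp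
    exact him.const_mul (esgn j)
  -- derivative is nonneg
  have hg0 : ∀ σ : ℝ, 0 ≤ σ →
      0 ≤ esgn j * (((ρ:ℂ) * ((σ:ℂ) + t * edir j ρ) ^ ((ρ:ℂ) - 1) * 1)).im := by
    intro σ hσ
    have hcast : ((ρ:ℂ) - 1) = (((ρ - 1 : ℝ)):ℂ) := by push_cast; ring
    rw [hcast, mul_one]
    have : ((ρ:ℂ) * ((σ:ℂ) + t * edir j ρ) ^ (((ρ - 1 : ℝ)):ℂ)).im
        = ρ * (((σ:ℂ) + t * edir j ρ) ^ (((ρ - 1 : ℝ)):ℂ)).im := by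
      simp [Complex.mul_im]
    rw [this]
    have h := esgn_im_cpow_nonneg j hρ hσ ht.le (by linarith)
      (by linarith : (0:ℝ) ≤ ρ - 1) (by linarith : ρ - 1 ≤ ρ)
    nlinarith
  -- monotone on Icc 0 s
  have hmono : MonotoneOn g (Icc 0 s) := by
    apply monotoneOn_of_hasDerivWithinAt_nonneg (convex_Icc 0 s)
      (f' := fun σ => esgn j * (((ρ:ℂ) * ((σ:ℂ) + t * edir j ρ) ^ ((ρ:ℂ) - 1) * 1)).im)
    · intro σ hσ
      exact (hg σ hσ.1).continuousAt.continuousWithinAt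
    · intro σ hσ
      rw [interior_Icc] at hσ
      exact (hg σ hσ.1.le).hasDerivWithinAt
    · intro σ hσ
      rw [interior_Icc] at hσ
      exact hg0 σ hσ.1.le
  -- value at 0
  have hg0val : g 0 = t ^ ρ := by
    have hw : ((0:ℝ):ℂ) + t * edir j ρ ≠ 0 :=
      z_ne_zero j hρ le_rfl ht.le (by linarith)
    rw [hgdef]
    simp only
    rw [im_cpow_real hw ρ]
    have habs : ‖((0:ℝ):ℂ) + t * edir j ρ‖ = t := by
      simp [abs_edir, abs_of_pos ht]
    have harg : esgn j * Complex.arg (((0:ℝ):ℂ) + t * edir j ρ) = π / (2 * ρ) := by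
      rw [arg_z_eq j hρ le_rfl ht.le (by linarith), habs]
      rw [show t * Real.sin (π / (2 * ρ)) / t = Real.sin (π / (2 * ρ)) from by
        field_simp]
      exact Real.arcsin_sin (neg_pi_div_two_le_theta hρ) (theta_le hρ)
    have hsin : esgn j * Real.sin (ρ * Complex.arg (((0:ℝ):ℂ) + t * edir j ρ))
        = Real.sin (ρ * (π / (2 * ρ))) := by
      rcases esgn_cases j with h | h <;> rw [h] at harg ⊢
      · rw [one_mul] at harg; rw [harg]; ring_nf
      · have : Complex.arg (((0:ℝ):ℂ) + t * edir j ρ) = -(π / (2 * ρ)) := by linarith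
        rw [this]
        rw [show ρ * -(π / (2*ρ)) = -(ρ * (π / (2*ρ))) by ring, Real.sin_neg]
        ring
    have h2 : ρ * (π / (2 * ρ)) = π / 2 := by field_simp
    calc esgn j * (‖((0:ℝ):ℂ) + t * edir j ρ‖ ^ ρ
          * Real.sin (ρ * Complex.arg (((0:ℝ):ℂ) + t * edir j ρ)))
        = ‖((0:ℝ):ℂ) + t * edir j ρ‖ ^ ρ
          * (esgn j * Real.sin (ρ * Complex.arg (((0:ℝ):ℂ) + t * edir j ρ))) := by ring
      _ = t ^ ρ * Real.sin (π/2) := by rw [habs, hsin, h2]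
      _ = t ^ ρ := by rw [Real.sin_pi_div_two, mul_one]
  have := hmono (left_mem_Icc.mpr hs.le) (right_mem_Icc.mpr hs.le) hs.le
  rw [hg0val] at this
  exact this

lemma phase_key (j : ℕ) {ρ s : ℝ} (hρ : 1 ≤ ρ) (hs : 0 < s) {t : ℝ} (ht : 0 ≤ t) :
    t ^ ρ ≤ esgn j * ((((s:ℂ) + t * edir j ρ)) ^ (ρ:ℂ)).im := by
  rcases eq_or_lt_of_le ht with h0 | htp
  · rw [← h0]
    rw [Real.zero_rpow (by linarith : ρ ≠ 0)]
    have : ((s:ℂ) + (0:ℝ) * edir j ρ) = ((s:ℂ)) := by push_cast; ring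
    rw [this, ← Complex.ofReal_cpow hs.le]
    simp
  · exact phase_mono j hρ hs htp

lemma abs_exp_phase (j : ℕ) {ρ s ω : ℝ} (hρ : 1 ≤ ρ) (hs : 0 < s) (hω : 0 < ω)
    {t : ℝ} (ht : 0 ≤ t) :
    ‖Complex.exp ((esgn j : ℂ) * Complex.I * (ω:ℂ)
      * (((s:ℂ) + t * edir j ρ) ^ (ρ:ℂ)))‖ ≤ Real.exp (-ω * t ^ ρ) := by
  rw [Complex.norm_exp]
  apply Real.exp_le_exp.mpr
  set Z := ((s:ℂ) + t * edir j ρ) ^ (ρ:ℂ) with hZ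
  have hre : ((esgn j : ℂ) * Complex.I * (ω:ℂ) * Z).re = -(ω * (esgn j * Z.im)) := by
    simp [Complex.mul_re, Complex.mul_im]
    ring
  rw [hre]
  have := phase_key j hρ hs ht
  nlinarith

lemma abs_phiInt (j n : ℕ) {ρ s ω t : ℝ} (hρ : 1 ≤ ρ) (hs : 0 < s) (hω : 0 < ω)
    (ht : 0 < t) :
    ‖phiInt j n s ω ρ 1 t‖ ≤ t ^ (n:ℝ) * Real.exp (-ω * t ^ ρ) := by
  unfold phiInt
  rw [show (((1:ℝ):ℂ) - 1) = 0 by norm_num, Complex.cpow_zero,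
    show ((s : ℂ) + (t : ℂ) * edir j ρ) - (s : ℂ) = (t:ℂ) * edir j ρ by ring]
  rw [norm_mul, norm_mul, norm_mul, norm_pow, norm_mul, norm_one, mul_one, abs_edir, mul_one,
    Complex.norm_real, Real.norm_eq_abs, abs_of_pos ht, mul_one, Real.rpow_natCast]
  exact mul_le_mul_of_nonneg_left (abs_exp_phase j hρ hs hω ht.le)
    (pow_nonneg ht.le n)

lemma abs_integral_phiInt_le (j n : ℕ) {ρ s ω : ℝ} (hρ : 1 ≤ ρ) (hs : 0 < s) (hω : 0 < ω) :
    ‖∫ t in Set.Ioi (0:ℝ), phiInt j n s ω ρ 1 t‖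
      ≤ ω ^ (-((n:ℝ)+1)/ρ) * (1/ρ) * Real.Gamma (((n:ℝ)+1)/ρ) := by
  have hq : (-1:ℝ) < (n:ℝ) := neg_one_lt_zero.trans_le (Nat.cast_nonneg n)
  have hmaj := integrableOn_rpow_mul_exp_neg_mul_rpow (p := ρ) hq (by linarith) hω
  calc ‖∫ t in Set.Ioi (0:ℝ), phiInt j n s ω ρ 1 t‖
      = ‖∫ t in Set.Ioi (0:ℝ), phiInt j n s ω ρ 1 t‖ := rfl
    _ ≤ ∫ t in Set.Ioi (0:ℝ), ‖phiInt j n s ω ρ 1 t‖ := norm_integral_le_integral_norm _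
    _ ≤ ∫ t in Set.Ioi (0:ℝ), t ^ ((n:ℝ)) * Real.exp (-ω * t ^ ρ) := by
        apply integral_mono_of_nonneg (ae_of_all _ fun t => norm_nonneg _) hmaj
        rw [Filter.EventuallyLE, ae_restrict_iff' measurableSet_Ioi]
        exact ae_of_all _ fun t ht => abs_phiInt j n hρ hs hω ht
    _ = ω ^ (-((n:ℝ)+1)/ρ) * (1/ρ) * Real.Gamma (((n:ℝ)+1)/ρ) :=
        integral_rpow_mul_exp_neg_mul_rpow (by linarith) hq hω

lemma part_i (j n : ℕ) {ρ s ω : ℝ} (hρ : 1 ≤ ρ) (hs : 0 < s) (hω : 0 < ω) :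
    ‖phiE j n s ω ρ 1‖ ≤
      1 / ((n.factorial : ℝ) * ρ) * Real.Gamma (((n:ℝ)+1)/ρ) * ω ^ (-((n:ℝ)+1)/ρ) := by
  rw [phiE, norm_mul, norm_div, norm_pow]
  have h1 : ‖(-1:ℂ)‖ = 1 := by simp
  rw [h1, one_pow, Complex.norm_natCast]
  have hb := abs_integral_phiInt_le j n hρ hs hω
  have hfac : (0:ℝ) < (n.factorial : ℝ) := by exact_mod_cast n.factorial_pos
  calc 1 / (n.factorial : ℝ) * ‖∫ t in Set.Ioi (0:ℝ), phiInt j n s ω ρ 1 t‖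
      ≤ 1 / (n.factorial : ℝ) * (ω ^ (-((n:ℝ)+1)/ρ) * (1/ρ) * Real.Gamma (((n:ℝ)+1)/ρ)) := by
        apply mul_le_mul_of_nonneg_left hb (by positivity)
    _ = 1 / ((n.factorial : ℝ) * ρ) * Real.Gamma (((n:ℝ)+1)/ρ) * ω ^ (-((n:ℝ)+1)/ρ) := by
        field_simp

noncomputable def Gf (j : ℕ) (ρ s ω : ℝ) (t : ℝ) : ℂ :=
  Complex.exp ((esgn j : ℂ) * Complex.I * (ω:ℂ) * (((s:ℂ) + t * edir j ρ) ^ (ρ:ℂ)))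

noncomputable def Ff (j n : ℕ) (ρ s ω : ℝ) (t : ℝ) : ℂ :=
  (t:ℂ)^n * ((s:ℂ) + t * edir j ρ) ^ (((1-ρ:ℝ)):ℂ) * Gf j ρ s ω t

noncomputable def Rf (j n : ℕ) (ρ s ω : ℝ) (t : ℝ) : ℂ :=
  ((n:ℂ) * (t:ℂ)^(n-1) * ((s:ℂ) + t * edir j ρ) ^ (((1-ρ:ℝ)):ℂ)
    + ((1-ρ:ℝ):ℂ) * (t:ℂ)^n * ((s:ℂ) + t * edir j ρ) ^ ((((1-ρ:ℝ)):ℂ)-1) * edir j ρ)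
    * Gf j ρ s ω t

lemma z_slit' (j : ℕ) {ρ s t : ℝ} (hρ : 1 ≤ ρ) (hs : 0 < s) (ht : 0 ≤ t) :
    ((s:ℂ) + t * edir j ρ) ∈ Complex.slitPlane :=
  z_mem_slitPlane j hρ hs.le ht (by linarith)

lemma hasDerivAt_zc (j : ℕ) {ρ s t : ℝ} (hρ : 1 ≤ ρ) (hs : 0 < s) (ht : 0 ≤ t) (c : ℂ) :
    HasDerivAt (fun t : ℝ => ((s:ℂ) + t * edir j ρ) ^ c)
      (c * ((s:ℂ) + t * edir j ρ) ^ (c - 1) * edir j ρ) t := by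
  have hΦ : HasDerivAt (fun ζ : ℂ => ((s:ℂ) + ζ * edir j ρ) ^ c)
      (c * ((s:ℂ) + (t:ℂ) * edir j ρ) ^ (c - 1) * (1 * edir j ρ)) ((t:ℂ)) :=
    HasDerivAt.cpow_const (((hasDerivAt_id _).mul_const _).const_add _) (z_slit' j hρ hs ht)
  rw [one_mul] at hΦ
  exact hΦ.comp_ofReal

lemma hasDerivAt_G (j : ℕ) {ρ s ω t : ℝ} (hρ : 1 ≤ ρ) (hs : 0 < s) (ht : 0 ≤ t) :
    HasDerivAt (Gf j ρ s ω)
      (Gf j ρ s ω t * ((esgn j : ℂ) * Complex.I * (ω:ℂ)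
        * ((ρ:ℂ) * ((s:ℂ) + t * edir j ρ) ^ ((ρ:ℂ) - 1) * edir j ρ))) t := by
  have h1 := (hasDerivAt_zc j hρ hs ht (ρ:ℂ)).const_mul ((esgn j : ℂ) * Complex.I * (ω:ℂ))
  have h2 := h1.cexp
  unfold Gf
  exact h2

lemma hasDerivAt_tn (n : ℕ) (t : ℝ) :
    HasDerivAt (fun t : ℝ => ((t:ℂ))^n) ((n:ℂ) * (t:ℂ)^(n-1)) t :=
  (hasDerivAt_pow n ((t:ℂ))).comp_ofReal

lemma key_deriv (j n : ℕ) {ρ s ω t : ℝ} (hρ : 1 ≤ ρ) (hs : 0 < s) (ht : 0 ≤ t) :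
    HasDerivAt (Ff j n ρ s ω)
      (Rf j n ρ s ω t
        + ((esgn j : ℂ) * Complex.I * (ω:ℂ) * (ρ:ℂ))
          * ((t:ℂ)^n * edir j ρ * Gf j ρ s ω t)) t := by
  have hz : ((s:ℂ) + t * edir j ρ) ≠ 0 := z_ne_zero j hρ hs.le ht (by linarith)
  have hsplit : ((s:ℂ) + t * edir j ρ) ^ (((1-ρ:ℝ)):ℂ)
      * ((s:ℂ) + t * edir j ρ) ^ ((ρ:ℂ) - 1) = 1 := by
    rw [← Complex.cpow_add _ _ hz, show (((1-ρ:ℝ)):ℂ) + ((ρ:ℂ) - 1) = 0 by push_cast; ring,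
      Complex.cpow_zero]
  have hF := ((hasDerivAt_tn n t).mul (hasDerivAt_zc j hρ hs ht (((1-ρ:ℝ)):ℂ))).mul
    (hasDerivAt_G j (ω := ω) hρ hs ht)
  unfold Ff Rf
  convert hF using 1
  · rfl
  · rfl
  simp only [Pi.mul_apply]
  set e := edir j ρ
  set w := (s:ℂ) + t * e
  set G := Gf j ρ s ω t
  linear_combination (-(((esgn j : ℂ) * Complex.I * (ω:ℂ) * (ρ:ℂ)) * (t:ℂ)^n * e * G)) * hsplit

lemma phiInt_eq (j n : ℕ) (ρ s ω t : ℝ) :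
    phiInt j n s ω ρ 1 t = (edir j ρ)^n * ((t:ℂ)^n * edir j ρ * Gf j ρ s ω t) := by
  unfold phiInt Gf
  rw [show (((1:ℝ):ℂ) - 1) = 0 by norm_num, Complex.cpow_zero,
    show ((s : ℂ) + (t : ℂ) * edir j ρ) - (s : ℂ) = (t:ℂ) * edir j ρ by ring]
  ring

lemma abs_Gf_le (j : ℕ) {ρ s ω t : ℝ} (hρ : 1 ≤ ρ) (hs : 0 < s) (hω : 0 < ω) (ht : 0 ≤ t) :
    ‖Gf j ρ s ω t‖ ≤ Real.exp (-ω * t ^ ρ) := abs_exp_phase j hρ hs hω ht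

lemma abs_zc_le (j : ℕ) {ρ s t c : ℝ} (hρ : 1 ≤ ρ) (hs : 0 < s) (ht : 0 ≤ t) (hc : c ≤ 0) :
    ‖((s:ℂ) + t * edir j ρ) ^ (c:ℂ)‖ ≤ s ^ c := by
  rw [abs_cpow_real (z_ne_zero j hρ hs.le ht (by linarith)) c]
  exact Real.rpow_le_rpow_of_nonpos hs (le_abs_z_left j hρ hs.le ht) hc

lemma integrable_H (j n : ℕ) {ρ s ω : ℝ} (hρ : 1 ≤ ρ) (hs : 0 < s) (hω : 0 < ω) :
    IntegrableOn (fun t : ℝ => (t:ℂ)^n * edir j ρ * Gf j ρ s ω t) (Set.Ioi 0) := by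
  have hq : (-1:ℝ) < (n:ℝ) := neg_one_lt_zero.trans_le (Nat.cast_nonneg n)
  apply Integrable.mono' (integrableOn_rpow_mul_exp_neg_mul_rpow (p := ρ) hq (by linarith) hω)
  · apply ContinuousOn.aestronglyMeasurable _ measurableSet_Ioi
    intro t ht
    exact (((Complex.continuous_ofReal.continuousAt.pow n).mul continuousAt_const).mul
      (hasDerivAt_G j (ω := ω) hρ hs (le_of_lt ht)).continuousAt).continuousWithinAt
  · rw [ae_restrict_iff' measurableSet_Ioi]
    apply ae_of_all _ fun t ht => ?_
    rw [norm_mul, norm_mul]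
    simp only [abs_edir, mul_one, norm_pow, Complex.norm_real, Real.norm_eq_abs,
      abs_of_pos (show (0:ℝ) < t from ht)]
    rw [← Real.rpow_natCast t n]
    exact mul_le_mul_of_nonneg_left (abs_Gf_le j hρ hs hω ht.le)
      (Real.rpow_nonneg ht.le _)

lemma abs_Rf_le (j n : ℕ) {ρ s ω t : ℝ} (hρ : 1 ≤ ρ) (hs : 0 < s) (hω : 0 < ω)
    (ht : 0 < t) :
    ‖Rf j n ρ s ω t‖ ≤
      (n:ℝ) * s^(1-ρ) * (t ^ (((n-1:ℕ)):ℝ) * Real.exp (-ω * t^ρ))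
        + (ρ-1) * s^(-ρ) * (t ^ ((n:ℕ):ℝ) * Real.exp (-ω * t^ρ)) := by
  unfold Rf
  rw [norm_mul]
  have hG := abs_Gf_le j hρ hs hω ht.le
  have hA : ‖(n:ℂ) * (t:ℂ)^(n-1) * ((s:ℂ) + t * edir j ρ) ^ (((1-ρ:ℝ)):ℂ)‖
      ≤ (n:ℝ) * t ^ (((n-1:ℕ)):ℝ) * s^(1-ρ) := by
    rw [norm_mul, norm_mul, norm_pow, Complex.norm_real, Real.norm_eq_abs, abs_of_pos ht, Complex.norm_natCast,
      ← Real.rpow_natCast t (n-1)]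
    exact mul_le_mul_of_nonneg_left (abs_zc_le j hρ hs ht.le (by linarith))
      (by positivity)
  have hB : ‖((1-ρ:ℝ):ℂ) * (t:ℂ)^n * ((s:ℂ) + t * edir j ρ)
        ^ ((((1-ρ:ℝ)):ℂ)-1) * edir j ρ‖
      ≤ (ρ-1) * t ^ ((n:ℕ):ℝ) * s^(-ρ) := by
    rw [norm_mul, norm_mul, norm_mul, abs_edir, mul_one, norm_pow, Complex.norm_real, Real.norm_eq_abs,
      Complex.norm_real, Real.norm_eq_abs, abs_of_pos ht, ← Real.rpow_natCast t n,
      show ((((1-ρ:ℝ)):ℂ)-1) = (((-ρ:ℝ)):ℂ) by push_cast; ring,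
      show |1-ρ| = ρ - 1 by rw [abs_of_nonpos (by linarith)]; ring]
    exact mul_le_mul_of_nonneg_left (abs_zc_le j hρ hs ht.le (by linarith))
      (mul_nonneg (by linarith) (Real.rpow_nonneg ht.le _))
  calc ‖_‖ * ‖Gf j ρ s ω t‖
      ≤ (‖(n:ℂ) * (t:ℂ)^(n-1) * ((s:ℂ) + t * edir j ρ) ^ (((1-ρ:ℝ)):ℂ)‖
          + ‖((1-ρ:ℝ):ℂ) * (t:ℂ)^n * ((s:ℂ) + t * edir j ρ)
            ^ ((((1-ρ:ℝ)):ℂ)-1) * edir j ρ‖) * ‖Gf j ρ s ω t‖ := by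
        apply mul_le_mul_of_nonneg_right (norm_add_le _ _) (norm_nonneg _)
    _ ≤ ((n:ℝ) * t ^ (((n-1:ℕ)):ℝ) * s^(1-ρ) + (ρ-1) * t ^ ((n:ℕ):ℝ) * s^(-ρ))
          * Real.exp (-ω * t^ρ) := by
        apply mul_le_mul (add_le_add hA hB) hG (norm_nonneg _)
        have h1 : (0:ℝ) ≤ (n:ℝ) * t ^ (((n-1:ℕ)):ℝ) * s^(1-ρ) := by positivity
        have h2 : (0:ℝ) ≤ (ρ-1) * t ^ ((n:ℕ):ℝ) * s^(-ρ) := by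
          have : (0:ℝ) ≤ ρ - 1 := by linarith
          positivity
        linarith
    _ = (n:ℝ) * s^(1-ρ) * (t ^ (((n-1:ℕ)):ℝ) * Real.exp (-ω * t^ρ))
          + (ρ-1) * s^(-ρ) * (t ^ ((n:ℕ):ℝ) * Real.exp (-ω * t^ρ)) := by ring

lemma integrable_majR (j n : ℕ) {ρ s ω : ℝ} (hρ : 1 ≤ ρ) (hs : 0 < s) (hω : 0 < ω) :
    IntegrableOn (fun t : ℝ =>
      (n:ℝ) * s^(1-ρ) * (t ^ (((n-1:ℕ)):ℝ) * Real.exp (-ω * t^ρ))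
        + (ρ-1) * s^(-ρ) * (t ^ ((n:ℕ):ℝ) * Real.exp (-ω * t^ρ))) (Set.Ioi 0) := by
  have hq1 : (-1:ℝ) < ((n-1:ℕ):ℝ) := neg_one_lt_zero.trans_le (Nat.cast_nonneg _)
  have hq2 : (-1:ℝ) < ((n:ℕ):ℝ) := neg_one_lt_zero.trans_le (Nat.cast_nonneg _)
  exact ((integrableOn_rpow_mul_exp_neg_mul_rpow (p := ρ) hq1 (by linarith) hω).const_mul _).add
    ((integrableOn_rpow_mul_exp_neg_mul_rpow (p := ρ) hq2 (by linarith) hω).const_mul _)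

lemma integrable_Rf (j n : ℕ) {ρ s ω : ℝ} (hρ : 1 ≤ ρ) (hs : 0 < s) (hω : 0 < ω) :
    IntegrableOn (Rf j n ρ s ω) (Set.Ioi 0) := by
  apply Integrable.mono' (integrable_majR j n hρ hs hω)
  · apply ContinuousOn.aestronglyMeasurable _ measurableSet_Ioi
    intro t ht
    apply ContinuousAt.continuousWithinAt
    have h1 := (hasDerivAt_zc j hρ hs ht.le (((1-ρ:ℝ)):ℂ)).continuousAt
    have h2 := (hasDerivAt_zc j hρ hs ht.le ((((1-ρ:ℝ)):ℂ)-1)).continuousAt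
    have h3 := (hasDerivAt_G j (ω := ω) hρ hs ht.le).continuousAt
    exact (((continuousAt_const.mul (Complex.continuous_ofReal.continuousAt.pow (n-1))).mul
      h1).add (((continuousAt_const.mul
        (Complex.continuous_ofReal.continuousAt.pow n)).mul h2).mul
        continuousAt_const)).mul h3
  · rw [ae_restrict_iff' measurableSet_Ioi]
    exact ae_of_all _ fun t ht => abs_Rf_le j n hρ hs hω ht

lemma tendsto_Ff (j n : ℕ) {ρ s ω : ℝ} (hρ : 1 ≤ ρ) (hs : 0 < s) (hω : 0 < ω) :
    Filter.Tendsto (Ff j n ρ s ω) Filter.atTop (nhds 0) := by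
  apply squeeze_zero_norm' (a := fun t : ℝ => s^(1-ρ) * (t ^ ((n:ℕ):ℝ) * Real.exp (-ω * t)))
  · filter_upwards [Filter.eventually_ge_atTop (1:ℝ)] with t ht1
    have ht : (0:ℝ) < t := lt_of_lt_of_le one_pos ht1
    unfold Ff
    rw [norm_mul, norm_mul]
    simp only [norm_pow, Complex.norm_real, Real.norm_eq_abs, abs_of_pos ht]
    have hz := abs_zc_le j hρ hs ht.le (by linarith : 1 - ρ ≤ 0)
    have hG : ‖Gf j ρ s ω t‖ ≤ Real.exp (-ω * t) := by
      apply (abs_Gf_le j hρ hs hω ht.le).trans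
      apply Real.exp_le_exp.mpr
      have : t ≤ t ^ ρ := by
        calc t = t ^ (1:ℝ) := (Real.rpow_one t).symm
          _ ≤ t ^ ρ := Real.rpow_le_rpow_of_exponent_le ht1 hρ
      nlinarith
    calc t^n * ‖((s:ℂ) + t * edir j ρ) ^ (((1-ρ:ℝ)):ℂ)‖
          * ‖Gf j ρ s ω t‖
        ≤ t^n * s^(1-ρ) * Real.exp (-ω * t) := by
          apply mul_le_mul (mul_le_mul_of_nonneg_left hz (by positivity)) hG
            (norm_nonneg _) (by positivity)
      _ = s^(1-ρ) * (t ^ ((n:ℕ):ℝ) * Real.exp (-ω * t)) := by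
          rw [← Real.rpow_natCast t n]; ring
  · have := (tendsto_rpow_mul_exp_neg_mul_atTop_nhds_zero ((n:ℕ):ℝ) ω hω).const_mul
      (s^(1-ρ))
    simpa using this

lemma ibp_identity (j n : ℕ) {ρ s ω : ℝ} (hρ : 1 ≤ ρ) (hs : 0 < s) (hω : 0 < ω) :
    ∫ t in Set.Ioi (0:ℝ), phiInt j n s ω ρ 1 t
      = (edir j ρ)^n * (((esgn j : ℂ) * Complex.I * (ω:ℂ) * (ρ:ℝ))⁻¹
          * (-(Ff j n ρ s ω 0) - ∫ t in Set.Ioi (0:ℝ), Rf j n ρ s ω t)) := by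
  set c0 : ℂ := (esgn j : ℂ) * Complex.I * (ω:ℂ) * (ρ:ℝ) with hc0def
  have hc0 : c0 ≠ 0 := by
    rw [hc0def]
    have hε : ((esgn j : ℝ) : ℂ) ≠ 0 := by
      rcases esgn_cases j with h | h <;> rw [h] <;> norm_num
    have hω' : ((ω:ℝ):ℂ) ≠ 0 := by exact_mod_cast ne_of_gt hω
    have hρ' : ((ρ:ℝ):ℂ) ≠ 0 := by exact_mod_cast ne_of_gt (lt_of_lt_of_le one_pos hρ)
    exact mul_ne_zero (mul_ne_zero (mul_ne_zero hε Complex.I_ne_zero) hω') hρ'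
  have hH := integrable_H j n hρ hs hω
  have hR := integrable_Rf j n hρ hs hω
  have hint : IntegrableOn (fun t : ℝ => Rf j n ρ s ω t
      + c0 * ((t:ℂ)^n * edir j ρ * Gf j ρ s ω t)) (Set.Ioi 0) :=
    hR.add (hH.const_mul c0)
  have hFTC := integral_Ioi_of_hasDerivAt_of_tendsto'
    (fun t ht => key_deriv j n hρ hs ht.out) hint (tendsto_Ff j n hρ hs hω)
  rw [integral_add hR (hH.const_mul c0), integral_const_mul] at hFTC
  have hHval : ∫ t in Set.Ioi (0:ℝ), (t:ℂ)^n * edir j ρ * Gf j ρ s ω t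
      = c0⁻¹ * (-(Ff j n ρ s ω 0) - ∫ t in Set.Ioi (0:ℝ), Rf j n ρ s ω t) := by
    field_simp
    linear_combination hFTC
  calc ∫ t in Set.Ioi (0:ℝ), phiInt j n s ω ρ 1 t
      = ∫ t in Set.Ioi (0:ℝ), (edir j ρ)^n * ((t:ℂ)^n * edir j ρ * Gf j ρ s ω t) := by
        simp_rw [phiInt_eq]
    _ = (edir j ρ)^n * ∫ t in Set.Ioi (0:ℝ), (t:ℂ)^n * edir j ρ * Gf j ρ s ω t :=
        integral_const_mul _ _
    _ = _ := by rw [hHval]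

lemma abs_Ff_zero_n0 (j : ℕ) {ρ s ω : ℝ} (hρ : 1 ≤ ρ) (hs : 0 < s) (hω : 0 < ω) :
    ‖Ff j 0 ρ s ω 0‖ ≤ s ^ (1-ρ) := by
  unfold Ff
  rw [pow_zero, one_mul, norm_mul]
  have h1 := abs_zc_le j hρ hs le_rfl (by linarith : 1 - ρ ≤ 0)
  have h2 : ‖Gf j ρ s ω 0‖ ≤ 1 := by
    have := abs_Gf_le j hρ hs hω (le_refl (0:ℝ))
    rwa [Real.zero_rpow (by linarith : ρ ≠ 0), mul_zero, Real.exp_zero] at this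
  calc ‖((s:ℂ) + (0:ℝ) * edir j ρ) ^ (((1-ρ:ℝ)):ℂ)‖ * ‖Gf j ρ s ω 0‖
      ≤ s ^ (1-ρ) * 1 := mul_le_mul h1 h2 (norm_nonneg _) (by positivity)
    _ = s ^ (1-ρ) := mul_one _

lemma Ff_zero_pos (j n : ℕ) (hn : n ≠ 0) (ρ s ω : ℝ) : Ff j n ρ s ω 0 = 0 := by
  unfold Ff
  rw [Complex.ofReal_zero, zero_pow hn, zero_mul, zero_mul]

lemma integral_Rf_bound (j n : ℕ) {ρ s ω : ℝ} (hρ : 1 ≤ ρ) (hs : 0 < s) (hω : 0 < ω) :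
    ‖∫ t in Set.Ioi (0:ℝ), Rf j n ρ s ω t‖ ≤
      (n:ℝ) * s^(1-ρ) * (ω ^ (-(((n-1:ℕ):ℝ)+1)/ρ) * (1/ρ) * Real.Gamma ((((n-1:ℕ):ℝ)+1)/ρ))
        + (ρ-1) * s^(-ρ) * (ω ^ (-((n:ℝ)+1)/ρ) * (1/ρ) * Real.Gamma (((n:ℝ)+1)/ρ)) := by
  have hq1 : (-1:ℝ) < ((n-1:ℕ):ℝ) := neg_one_lt_zero.trans_le (Nat.cast_nonneg _)
  have hq2 : (-1:ℝ) < ((n:ℕ):ℝ) := neg_one_lt_zero.trans_le (Nat.cast_nonneg _)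
  have hi1 := integrableOn_rpow_mul_exp_neg_mul_rpow (p := ρ) hq1 (by linarith) hω
  have hi2 := integrableOn_rpow_mul_exp_neg_mul_rpow (p := ρ) hq2 (by linarith) hω
  calc ‖∫ t in Set.Ioi (0:ℝ), Rf j n ρ s ω t‖
      = ‖∫ t in Set.Ioi (0:ℝ), Rf j n ρ s ω t‖ := rfl
    _ ≤ ∫ t in Set.Ioi (0:ℝ), ‖Rf j n ρ s ω t‖ := norm_integral_le_integral_norm _
    _ ≤ ∫ t in Set.Ioi (0:ℝ),
          ((n:ℝ) * s^(1-ρ) * (t ^ (((n-1:ℕ)):ℝ) * Real.exp (-ω * t^ρ))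
            + (ρ-1) * s^(-ρ) * (t ^ ((n:ℕ):ℝ) * Real.exp (-ω * t^ρ))) := by
        apply integral_mono_of_nonneg (ae_of_all _ fun t => norm_nonneg _)
          (integrable_majR j n hρ hs hω)
        rw [Filter.EventuallyLE, ae_restrict_iff' measurableSet_Ioi]
        exact ae_of_all _ fun t ht => abs_Rf_le j n hρ hs hω ht
    _ = (n:ℝ) * s^(1-ρ) * (ω ^ (-(((n-1:ℕ):ℝ)+1)/ρ) * (1/ρ)
            * Real.Gamma ((((n-1:ℕ):ℝ)+1)/ρ))
        + (ρ-1) * s^(-ρ) * (ω ^ (-((n:ℝ)+1)/ρ) * (1/ρ) * Real.Gamma (((n:ℝ)+1)/ρ)) := by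
        rw [integral_add (hi1.const_mul _) (hi2.const_mul _), integral_const_mul,
          integral_const_mul,
          integral_rpow_mul_exp_neg_mul_rpow (by linarith) hq1 hω,
          integral_rpow_mul_exp_neg_mul_rpow (by linarith) hq2 hω]

lemma part_ii_main (j n : ℕ) {ρ s ω : ℝ} (hρ : 1 ≤ ρ) (hs : 0 < s) (hω : 0 < ω) :
    ‖phiE j n s ω ρ 1‖ ≤
      (1/(n.factorial:ℝ)) * ((ω*ρ)⁻¹ * (‖Ff j n ρ s ω 0‖
        + ((n:ℝ) * s^(1-ρ) * (ω ^ (-(((n-1:ℕ):ℝ)+1)/ρ) * (1/ρ)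
              * Real.Gamma ((((n-1:ℕ):ℝ)+1)/ρ))
          + (ρ-1) * s^(-ρ) * (ω ^ (-((n:ℝ)+1)/ρ) * (1/ρ)
              * Real.Gamma (((n:ℝ)+1)/ρ))))) := by
  rw [phiE, norm_mul, norm_div, norm_pow]
  have h1 : ‖(-1:ℂ)‖ = 1 := by simp
  rw [h1, one_pow, Complex.norm_natCast]
  apply mul_le_mul_of_nonneg_left _ (by positivity)
  rw [ibp_identity j n hρ hs hω, norm_mul, norm_pow, abs_edir, one_pow, one_mul, norm_mul,
    norm_inv]
  have habs_c0 : ‖(esgn j : ℂ) * Complex.I * (ω:ℂ) * (ρ:ℝ)‖ = ω * ρ := by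
    rw [norm_mul, norm_mul, norm_mul, Complex.norm_I, Complex.norm_real, Real.norm_eq_abs, Complex.norm_real, Real.norm_eq_abs,
      Complex.norm_real, Real.norm_eq_abs]
    have h2 : |esgn j| = 1 := by rcases esgn_cases j with h | h <;> rw [h] <;> norm_num
    rw [h2, abs_of_pos hω, abs_of_pos (lt_of_lt_of_le one_pos hρ)]
    ring
  rw [habs_c0]
  apply mul_le_mul_of_nonneg_left _ (by positivity)
  have hdiff : -(Ff j n ρ s ω 0) - (∫ t in Set.Ioi (0:ℝ), Rf j n ρ s ω t)
      = -((Ff j n ρ s ω 0) + ∫ t in Set.Ioi (0:ℝ), Rf j n ρ s ω t) := by ring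
  rw [hdiff, norm_neg]
  exact (norm_add_le _ _).trans
    (add_le_add le_rfl (integral_Rf_bound j n hρ hs hω))

theorem statement3 (j : ℕ) (hj : j = 1 ∨ j = 2) (ρ : ℝ) (hρ : 1 ≤ ρ)
    (N : ℕ) (hN : 1 ≤ N) :
    (∀ s > (0 : ℝ), ∀ ω > (0 : ℝ),
      ‖phiE j (N - 1) s ω ρ 1‖ ≤
        (1 / (((N - 1).factorial : ℝ) * ρ)) * Real.Gamma ((N : ℝ) / ρ) * ω ^ (-(N : ℝ) / ρ)) ∧
    (∀ s > (0 : ℝ), ∀ ω > (0 : ℝ),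
      ‖phiE j (N - 1) s ω ρ 1‖ ≤
        (if N = 1 then ρ⁻¹ else (1 / (ρ ^ 2 * ((N - 2).factorial : ℝ))) * Real.Gamma (((N : ℝ) - 1) / ρ)) *
            ω ^ (-(1 + ((N : ℝ) - 1) / ρ)) * s ^ (1 - ρ) +
          (if N = 1 then ((ρ - 1) / ρ ^ 2) * Real.Gamma (1 / ρ)
            else ((ρ - 1) / (ρ ^ 2 * ((N - 1).factorial : ℝ))) * Real.Gamma ((N : ℝ) / ρ)) *
            ω ^ (-(1 + (N : ℝ) / ρ)) * s ^ (-ρ)) := by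
  have hcast : (((N-1:ℕ)):ℝ) + 1 = (N:ℝ) := by
    have h := Nat.cast_sub (R := ℝ) hN
    rw [h]; push_cast; ring
  constructor
  · intro s hs ω hω
    have h := part_i j (N-1) hρ hs hω
    rwa [hcast] at h
  · intro s hs ω hω
    have hsplit : ∀ c : ℝ, ω ^ (-(1 + c)) = ω⁻¹ * ω ^ (-c) := fun c => by
      rw [show -(1+c) = -1 + -c by ring, Real.rpow_add hω, Real.rpow_neg_one]
    rcases eq_or_lt_of_le hN with h1 | h2
    · -- N = 1
      have hN1 : N = 1 := h1.symm
      subst hN1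
      simp only [if_pos rfl]
      have h := part_ii_main j 0 hρ hs hω
      have hX : (0:ℝ) ≤ (ρ-1) * s^(-ρ) * (ω ^ (-((((0:ℕ)):ℝ)+1)/ρ) * (1/ρ)
          * Real.Gamma (((((0:ℕ)):ℝ)+1)/ρ)) := by
        have hΓ : 0 ≤ Real.Gamma (((((0:ℕ)):ℝ)+1)/ρ) := by
          apply Real.Gamma_nonneg_of_nonneg; positivity
        have : (0:ℝ) ≤ ρ - 1 := by linarith
        positivity
      calc ‖phiE j (1-1) s ω ρ 1‖
          ≤ (1/((Nat.factorial 0):ℝ)) * ((ω*ρ)⁻¹ * (‖Ff j 0 ρ s ω 0‖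
            + (((0:ℕ):ℝ) * s^(1-ρ) * (ω ^ (-(((0-1:ℕ):ℝ)+1)/ρ) * (1/ρ)
                  * Real.Gamma ((((0-1:ℕ):ℝ)+1)/ρ))
              + (ρ-1) * s^(-ρ) * (ω ^ (-(((0:ℕ):ℝ)+1)/ρ) * (1/ρ)
                  * Real.Gamma ((((0:ℕ):ℝ)+1)/ρ))))) := h
        _ ≤ (1/((Nat.factorial 0):ℝ)) * ((ω*ρ)⁻¹ * (s ^ (1-ρ)
            + (((0:ℕ):ℝ) * s^(1-ρ) * (ω ^ (-(((0-1:ℕ):ℝ)+1)/ρ) * (1/ρ)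
                  * Real.Gamma ((((0-1:ℕ):ℝ)+1)/ρ))
              + (ρ-1) * s^(-ρ) * (ω ^ (-(((0:ℕ):ℝ)+1)/ρ) * (1/ρ)
                  * Real.Gamma ((((0:ℕ):ℝ)+1)/ρ))))) := by
            apply mul_le_mul_of_nonneg_left _ (by positivity)
            apply mul_le_mul_of_nonneg_left _ (by positivity)
            exact add_le_add_left (abs_Ff_zero_n0 j hρ hs hω) _
        _ = ρ⁻¹ * ω ^ (-(1 + (((1:ℕ):ℝ) - 1) / ρ)) * s ^ (1 - ρ) +
            (ρ - 1) / ρ ^ 2 * Real.Gamma (1 / ρ) * ω ^ (-(1 + ((1:ℕ):ℝ) / ρ)) * s ^ (-ρ) := by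
            norm_num [Nat.factorial]
            rw [Real.rpow_add hω, Real.rpow_neg_one,
              show (-1:ℝ)/ρ = -ρ⁻¹ by ring]
            have hρ0 : ρ ≠ 0 := by linarith
            have hω0 : ω ≠ 0 := ne_of_gt hω
            field_simp
    · -- N ≥ 2
      have hN2 : 2 ≤ N := h2
      have hne : N ≠ 1 := by omega
      simp only [if_neg hne]
      have h := part_ii_main j (N-1) hρ hs hω
      have hzero : Ff j (N-1) ρ s ω 0 = 0 := Ff_zero_pos j (N-1) (by omega) ρ s ω
      rw [hzero, norm_zero, zero_add] at h
      have hc1 : ((N-1:ℕ):ℝ) = (N:ℝ)-1 := by rw [Nat.cast_sub hN]; norm_num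
      have hc2 : ((N-1-1:ℕ):ℝ) = (N:ℝ)-2 := by
        rw [show N-1-1 = N-2 from by omega, Nat.cast_sub hN2]; norm_num
      have hfac : (((N-1).factorial:ℕ):ℝ) = ((N:ℝ)-1) * (((N-2).factorial:ℕ):ℝ) := by
        rw [show N-1 = (N-2)+1 from by omega, Nat.factorial_succ]
        push_cast [Nat.cast_sub hN2]
        ring
      rw [hc1, hc2] at h
      rw [show -(((N:ℝ)-2)+1)/ρ = -(((N:ℝ)-1)/ρ) from by ring,
        show (((N:ℝ)-2)+1)/ρ = ((N:ℝ)-1)/ρ from by ring,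
        show -(((N:ℝ)-1)+1)/ρ = -((N:ℝ)/ρ) from by ring,
        show (((N:ℝ)-1)+1)/ρ = (N:ℝ)/ρ from by ring] at h
      calc ‖phiE j (N-1) s ω ρ 1‖
          ≤ 1/(((N-1).factorial:ℕ):ℝ) * ((ω*ρ)⁻¹ *
              (((N:ℝ)-1) * s^(1-ρ) * (ω ^ (-(((N:ℝ)-1)/ρ)) * (1/ρ)
                  * Real.Gamma (((N:ℝ)-1)/ρ))
                + (ρ-1) * s^(-ρ) * (ω ^ (-((N:ℝ)/ρ)) * (1/ρ)
                  * Real.Gamma ((N:ℝ)/ρ)))) := h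
        _ = 1 / (ρ ^ 2 * ((N - 2).factorial : ℝ)) * Real.Gamma (((N : ℝ) - 1) / ρ) *
              ω ^ (-(1 + ((N : ℝ) - 1) / ρ)) * s ^ (1 - ρ) +
            (ρ - 1) / (ρ ^ 2 * ((N - 1).factorial : ℝ)) * Real.Gamma ((N : ℝ) / ρ) *
              ω ^ (-(1 + (N : ℝ) / ρ)) * s ^ (-ρ) := by
            rw [hsplit (((N:ℝ)-1)/ρ), hsplit ((N:ℝ)/ρ), hfac]
            have hρ0 : ρ ≠ 0 := by linarith
            have hω0 : ω ≠ 0 := ne_of_gt hω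
            have hf0 : (((N-2).factorial:ℕ):ℝ) ≠ 0 := by
              exact_mod_cast (Nat.factorial_pos (N-2)).ne'
            have hN1 : ((N:ℝ)-1) ≠ 0 := by
              have : (2:ℝ) ≤ (N:ℝ) := by exact_mod_cast hN2
              linarith
            field_simp
end

section
/- Fix ω > 0, ρ ≥ 1 and j ∈ {1,2}. Then for all s ≥ 0 and t ≥ 0, setting z := s + t e^{(−1)^{j+1} iπ/(2ρ)}, one has | e^{(−1)^{j+1} iω z^{ρ}} | ≤ e^{−ω t^{ρ}}, where z^{ρ} denotes the principal-branch complex power. -/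
open Complex Real

lemma im_cpow_real_s10 (z : ℂ) (hz : z ≠ 0) (r : ℝ) :
    (z ^ (r : ℂ)).im = Real.exp (r * Real.log ‖z‖) * Real.sin (r * Complex.arg z) := by
  rw [Complex.cpow_def_of_ne_zero hz, Complex.exp_im]
  simp [Complex.mul_re, Complex.mul_im, Complex.log_re, Complex.log_im, mul_comm]

lemma key (ρ : ℝ) (hρ : 1 ≤ ρ) {s t : ℝ} (hs : 0 ≤ s) (ht : 0 ≤ t) :
    t ^ ρ ≤ (((s : ℂ) + (t : ℂ) * Complex.exp ((Real.pi / (2 * ρ) : ℝ) * Complex.I)) ^ (ρ : ℂ)).im := by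
  have hρ0 : (0:ℝ) < ρ := lt_of_lt_of_le one_pos hρ
  set θ : ℝ := Real.pi / (2 * ρ) with hθdef
  have hθ0 : 0 < θ := div_pos Real.pi_pos (by linarith)
  have hθle : θ ≤ π / 2 := by
    rw [hθdef, div_le_div_iff₀ (by linarith) two_pos]
    nlinarith [Real.pi_pos]
  have hρθ : ρ * θ = π / 2 := by
    field_simp [hθdef]
    rw [hθdef]; field_simp
  have hsinθ : 0 < Real.sin θ := Real.sin_pos_of_pos_of_lt_pi hθ0 (by linarith [Real.pi_pos])
  have hcosθ : 0 ≤ Real.cos θ := Real.cos_nonneg_of_mem_Icc ⟨by linarith, hθle⟩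
  set e : ℂ := Complex.exp ((θ : ℝ) * Complex.I) with hedef
  have he_re : e.re = Real.cos θ := Complex.exp_ofReal_mul_I_re θ
  have he_im : e.im = Real.sin θ := Complex.exp_ofReal_mul_I_im θ
  rcases eq_or_lt_of_le ht with h0 | ht
  · -- t = 0
    subst h0
    rw [Real.zero_rpow (ne_of_gt hρ0)]
    simp only [Complex.ofReal_zero, zero_mul, add_zero]
    rw [← Complex.ofReal_cpow hs]
    simp
  · -- t > 0
    set z : ℝ → ℂ := fun s => (s : ℂ) + (t : ℂ) * e with hzdef
    have hzim : ∀ s : ℝ, (z s).im = t * Real.sin θ := by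
      intro s; simp [hzdef, Complex.add_im, Complex.mul_im, he_re, he_im]
    have hzim_pos : ∀ s : ℝ, 0 < (z s).im := fun s => by
      rw [hzim]; positivity
    have hzslit : ∀ s : ℝ, z s ∈ Complex.slitPlane := fun s =>
      Or.inr (ne_of_gt (hzim_pos s))
    have hzne : ∀ s : ℝ, z s ≠ 0 := fun s =>
      Complex.slitPlane_ne_zero (hzslit s)
    have hzre : ∀ s : ℝ, (z s).re = s + t * Real.cos θ := by
      intro s; simp [hzdef, Complex.add_re, Complex.mul_re, he_re, he_im]
    -- derivative
    set F : ℝ → ℝ := fun s => ((z s) ^ (ρ : ℂ)).im with hFdef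
    have hzderiv : ∀ s : ℝ, HasDerivAt z 1 s := by
      intro s
      have h1 : HasDerivAt (fun s : ℝ => (s : ℂ)) 1 s := by
        exact Complex.ofRealCLM.hasDerivAt (x := s)
      exact h1.add_const ((t : ℂ) * e)
    have hFderiv : ∀ s : ℝ, HasDerivAt F ((((ρ:ℂ) * z s ^ ((ρ:ℂ) - 1)) : ℂ).im) s := by
      intro s
      have h2 : HasDerivAt (fun s : ℝ => z s ^ (ρ:ℂ)) ((ρ:ℂ) * z s ^ ((ρ:ℂ) - 1)) s := by
        have := HasDerivAt.scomp (x := s)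
          (Complex.hasStrictDerivAt_cpow_const (c := (ρ:ℂ)) (hzslit s)).hasDerivAt (hzderiv s)
        rw [one_smul] at this
        exact this
      exact (Complex.imCLM.hasFDerivAt.comp_hasDerivAt s h2)
    -- derivative nonneg for s ≥ 0
    have hderiv_nonneg : ∀ s : ℝ, 0 ≤ s → 0 ≤ (((ρ:ℂ) * z s ^ ((ρ:ℂ) - 1)) : ℂ).im := by
      intro s hs
      have harg0 : 0 ≤ Complex.arg (z s) := Complex.arg_nonneg_iff.2 (le_of_lt (hzim_pos s))
      have hargθ : Complex.arg (z s) ≤ θ := by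
        have habs : t ≤ ‖z s‖ := by
          have h1 : t ^ 2 ≤ ‖z s‖ ^ 2 := by
            rw [Complex.sq_norm, Complex.normSq_apply, hzre, hzim]
            nlinarith [Real.sin_sq_add_cos_sq θ, sq_nonneg s, mul_nonneg (mul_nonneg hs ht.le) hcosθ]
          nlinarith [norm_nonneg (z s)]
        have hsin_le : Real.sin (Complex.arg (z s)) ≤ Real.sin θ := by
          rw [Complex.sin_arg, hzim]
          rw [div_le_iff₀ (lt_of_lt_of_le ht habs)]
          nlinarith
        by_contra hcon
        push_neg at hcon
        have harg_le : Complex.arg (z s) ≤ π / 2 :=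
          Complex.arg_le_pi_div_two_iff.2 (Or.inl (by rw [hzre]; positivity))
        have := Real.strictMonoOn_sin ⟨by linarith, hθle.trans (by linarith)⟩
          ⟨by linarith, harg_le⟩ hcon
        linarith
      have hne := hzne s
      have : ((ρ:ℂ) - 1) = (((ρ - 1 : ℝ)) : ℂ) := by push_cast; ring
      rw [this]
      have him := im_cpow_real_s10 (z s) hne (ρ - 1)
      have hsin : 0 ≤ Real.sin ((ρ - 1) * Complex.arg (z s)) := by
        apply Real.sin_nonneg_of_nonneg_of_le_pi
        · exact mul_nonneg (by linarith) harg0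
        · have h1 : (ρ - 1) * Complex.arg (z s) ≤ (ρ - 1) * θ := by nlinarith
          have h2 : (ρ - 1) * θ ≤ ρ * θ := by nlinarith
          linarith [Real.pi_pos, hρθ ▸ h2]
      have : ((ρ:ℂ) * (z s) ^ (((ρ - 1 : ℝ)) : ℂ)).im = ρ * ((z s) ^ (((ρ - 1 : ℝ)) : ℂ)).im := by
        simp [Complex.mul_im]
      rw [this, him]
      positivity
    -- value at 0
    have hF0 : F 0 = t ^ ρ := by
      have hz0 : z 0 = (t : ℂ) * e := by simp [hzdef]
      have habs : ‖(t:ℂ) * e‖ = t := by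
        rw [norm_mul, Complex.norm_real, Real.norm_eq_abs, abs_of_pos ht, hedef,
          Complex.norm_exp_ofReal_mul_I, mul_one]
      have harge : Complex.arg e = θ := by
        have hmem : θ ∈ Set.Ioc (-π) π := ⟨by linarith [Real.pi_pos], by linarith [Real.pi_pos]⟩
        rw [hedef, Complex.exp_mul_I]
        exact Complex.arg_cos_add_sin_mul_I hmem
      have harg : Complex.arg ((t:ℂ) * e) = θ := by
        rw [Complex.arg_real_mul _ ht, harge]
      have hne : (t:ℂ) * e ≠ 0 :=
        mul_ne_zero (by exact_mod_cast ne_of_gt ht) (Complex.exp_ne_zero _)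
      rw [hFdef]
      simp only [hz0]
      rw [im_cpow_real_s10 _ hne ρ, habs, harg, hρθ, Real.sin_pi_div_two, mul_one,
        Real.rpow_def_of_pos ht, mul_comm (Real.log t) ρ]
    -- monotone
    have hmono : MonotoneOn F (Set.Ici (0:ℝ)) := by
      apply monotoneOn_of_hasDerivWithinAt_nonneg (convex_Ici 0)
        (f' := fun s => (((ρ:ℂ) * z s ^ ((ρ:ℂ) - 1)) : ℂ).im)
      · exact fun s _ => (hFderiv s).continuousAt.continuousWithinAt
      · intro x hx
        exact (hFderiv x).hasDerivWithinAt
      · intro x hx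
        rw [interior_Ici] at hx
        exact hderiv_nonneg x (le_of_lt hx)
    have := hmono (Set.self_mem_Ici) (Set.mem_Ici.2 hs) hs
    rw [hF0] at this
    exact this

theorem statement10 (ω : ℝ) (hω : 0 < ω) (ρ : ℝ) (hρ : 1 ≤ ρ)
    (j : ℕ) (hj : j = 1 ∨ j = 2) :
    ∀ s ≥ (0 : ℝ), ∀ t ≥ (0 : ℝ),
      ‖Complex.exp ((esgn j : ℂ) * Complex.I * (ω : ℂ) *
          (((s : ℂ) + (t : ℂ) * edir j ρ) ^ (ρ : ℂ)))‖ ≤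
        Real.exp (-ω * t ^ ρ) := by
  intro s hs t ht
  have hρ0 : (0:ℝ) < ρ := lt_of_lt_of_le one_pos hρ
  set θ : ℝ := Real.pi / (2 * ρ) with hθdef
  have hθ0 : 0 < θ := div_pos Real.pi_pos (by linarith)
  have hθle : θ ≤ π / 2 := by
    rw [hθdef, div_le_div_iff₀ (by linarith) two_pos]
    nlinarith [Real.pi_pos]
  have hcosθ : 0 ≤ Real.cos θ := Real.cos_nonneg_of_mem_Icc ⟨by linarith, hθle⟩
  set z₁ : ℂ := (s : ℂ) + (t : ℂ) * Complex.exp ((θ : ℝ) * Complex.I) with hz₁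
  have hkey : t ^ ρ ≤ (z₁ ^ (ρ : ℂ)).im := key ρ hρ hs ht
  have main : ∀ W : ℂ, t ^ ρ ≤ esgn j * W.im →
      ‖Complex.exp ((esgn j : ℂ) * Complex.I * (ω : ℂ) * W)‖ ≤
        Real.exp (-ω * t ^ ρ) := by
    intro W hW
    rw [Complex.norm_exp, Real.exp_le_exp]
    have hre : ((esgn j : ℂ) * Complex.I * (ω : ℂ) * W).re = -(esgn j * ω * W.im) := by
      simp [Complex.mul_re, Complex.mul_im]
    rw [hre]
    nlinarith
  obtain hj | hj := hj <;> subst hj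
  · -- j = 1
    have he : edir 1 ρ = Complex.exp ((θ : ℝ) * Complex.I) := by
      simp [edir, esgn, hθdef]
    rw [he]
    apply main
    simpa [esgn] using hkey
  · -- j = 2
    have he : edir 2 ρ = Complex.exp (-((θ : ℝ) * Complex.I)) := by
      simp only [edir, esgn, hθdef]
      norm_num
    have hconj : (s : ℂ) + (t : ℂ) * edir 2 ρ = (starRingEnd ℂ) z₁ := by
      rw [he, hz₁]
      rw [map_add, map_mul, ← Complex.exp_conj]
      simp [Complex.conj_ofReal]
    have hargne : z₁.arg ≠ π := by
      intro h
      have h2 := Complex.arg_eq_pi_iff.1 h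
      have hre : z₁.re = s + t * Real.cos θ := by
        simp [hz₁, Complex.add_re, Complex.mul_re, Complex.exp_ofReal_mul_I_re,
          Complex.exp_ofReal_mul_I_im]
      rw [hre] at h2
      nlinarith [h2.1]
    have hcpow : ((s : ℂ) + (t : ℂ) * edir 2 ρ) ^ (ρ : ℂ)
        = (starRingEnd ℂ) (z₁ ^ (ρ : ℂ)) := by
      rw [hconj, Complex.conj_cpow _ _ hargne, Complex.conj_ofReal]
    rw [hcpow]
    apply main
    simp only [esgn, Complex.conj_im]
    norm_num
    simpa using hkey
end
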